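/- Let G be a finite simple connected triangle-free graph of minimum degree at least 3 with a star-cover {S_1, …, S_m} in which every star has size at least 6. Let T be a tree in G of maximal size (number of edges) subject to: (1) T contains no two adjacent vertices of degree 2 in T; (2) the vertex set of G − V(T) is the union of the vertex sets of the stars S_i for i in some subset I of {1, …, m}; and (3) whenever a leaf v of T is joined in G to a vertex of G − V(T), the neighbour of v in T has degree at least 5 in T. Then every vertex of T has at most one neighbour in G lying outside V(T). -/

import Mathlib

open SimpleGraph

/-- The degree of a vertex `v` in a simple graph `H`. -/
noncomputable def gdeg {V : Type} (H : SimpleGraph V) (v : V) : ℕ :=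
  Nat.card (H.neighborSet v)

/-- The degree of a vertex `v` in a subgraph `H` of `G`. -/
noncomputable def subdeg {V : Type} {G : SimpleGraph V} (H : G.Subgraph) (v : V) : ℕ :=
  Nat.card (H.neighborSet v)

/-- A subgraph is a star if it is a tree with at most one vertex of degree greater than 1. -/
def IsStar {V : Type} {G : SimpleGraph V} (H : G.Subgraph) : Prop :=
  H.coe.IsTree ∧ {v ∈ H.verts | 1 < subdeg H v}.Subsingleton


private lemma my_edgeFinset_card {W : Type*} {G : SimpleGraph W} [Fintype G.edgeSet] :
    G.edgeFinset.card = G.edgeSet.ncard := by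
  rw [Set.ncard_eq_toFinset_card']; rfl

private lemma delete_nonbridge {W : Type*} [Fintype W] (G : SimpleGraph W) (hG : G.Connected)
    (hac : ¬ G.IsAcyclic) :
    ∃ G' : SimpleGraph W, G'.Connected ∧ G'.edgeSet.ncard + 1 = G.edgeSet.ncard := by
  rw [isAcyclic_iff_forall_adj_isBridge] at hac
  push_neg at hac
  obtain ⟨v, w, hadj, hnb⟩ := hac
  rw [isBridge_iff] at hnb
  have hre : (G \ fromEdgeSet {s(v,w)}).Reachable v w := by
    by_contra hre; exact hnb hre
  refine ⟨G.deleteEdges {s(v,w)}, ?_, ?_⟩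
  · have hstep : ∀ x y : W, G.Adj x y → (G.deleteEdges {s(v,w)}).Reachable x y := by
      intro x y hxy
      by_cases he : s(x,y) = s(v,w)
      · rw [Sym2.eq_iff] at he
        rcases he with ⟨rfl, rfl⟩ | ⟨rfl, rfl⟩
        · exact hre
        · exact hre.symm
      · exact Adj.reachable (by simp [SimpleGraph.deleteEdges_adj, hxy, he])
    rw [connected_iff] at hG ⊢
    refine ⟨?_, hG.2⟩
    intro x y
    obtain ⟨p⟩ := hG.1 x y
    induction p with
    | nil => exact Reachable.refl _
    | cons h q ih => exact (hstep _ _ h).trans ih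
  · have hmem : s(v,w) ∈ G.edgeSet := hadj
    rw [edgeSet_deleteEdges, Set.ncard_diff_singleton_of_mem hmem]
    have : 0 < G.edgeSet.ncard := by
      rw [Set.ncard_pos (G.edgeSet.toFinite)]
      exact ⟨_, hmem⟩
    omega

private lemma conn_card_le {W : Type*} [Fintype W] :
    ∀ (n : ℕ) (G : SimpleGraph W), G.Connected → G.edgeSet.ncard = n →
      Fintype.card W ≤ n + 1 := by
  intro n
  induction n using Nat.strong_induction_on with
  | _ n ih =>
    intro G hG hn
    by_cases hac : G.IsAcyclic
    · haveI : Fintype G.edgeSet := G.edgeSet.toFinite.fintype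
      have := IsTree.card_edgeFinset ⟨hG, hac⟩
      rw [my_edgeFinset_card, hn] at this
      omega
    · obtain ⟨G', hG'conn, hG'card⟩ := delete_nonbridge G hG hac
      rw [hn] at hG'card
      have := ih (n-1) (by omega) G' hG'conn (by omega)
      omega

private lemma tree_count {W : Type*} [Fintype W] {G : SimpleGraph W} (h : G.IsTree) :
    G.edgeSet.ncard + 1 = Fintype.card W := by
  haveI : Fintype G.edgeSet := G.edgeSet.toFinite.fintype
  have := h.card_edgeFinset
  rwa [my_edgeFinset_card] at this

private lemma isTree_of_conn_card {W : Type*} [Fintype W] (G : SimpleGraph W) (hG : G.Connected)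
    (hc : G.edgeSet.ncard + 1 = Fintype.card W) : G.IsTree := by
  refine ⟨hG, ?_⟩
  by_contra hac
  obtain ⟨G', hG'conn, hG'card⟩ := delete_nonbridge G hG hac
  have := conn_card_le _ G' hG'conn rfl
  omega


lemma SimpleGraph.Subgraph.Connected.sup {V : Type} {G : SimpleGraph V} {H K : G.Subgraph}
    (hH : H.Connected) (hK : K.Connected) (hn : (H ⊓ K).verts.Nonempty) :
    (H ⊔ K).Connected :=
  Subgraph.connected_sup hH.preconnected hK.preconnected hn

private lemma subdeg_eq {V : Type} {G : SimpleGraph V} (H : G.Subgraph) (v : V) :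
    subdeg H v = (H.neighborSet v).ncard := Nat.card_coe_set_eq _

private lemma nbr_empty {V : Type} {G : SimpleGraph V} (H : G.Subgraph) {v : V}
    (hv : v ∉ H.verts) : H.neighborSet v = ∅ := by
  ext z
  simp only [Subgraph.mem_neighborSet, Set.mem_empty_iff_false, iff_false]
  intro h
  exact hv (H.edge_vert h)

private lemma subdeg_zero {V : Type} {G : SimpleGraph V} (H : G.Subgraph) {v : V}
    (hv : v ∉ H.verts) : subdeg H v = 0 := by
  rw [subdeg_eq, nbr_empty H hv, Set.ncard_empty]

private lemma coe_edgeSet_ncard {V : Type} {G : SimpleGraph V} (H : G.Subgraph) :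
    H.coe.edgeSet.ncard = H.edgeSet.ncard := by
  have himg : Sym2.map (Subtype.val : H.verts → V) '' H.coe.edgeSet = H.edgeSet := by
    apply Set.Subset.antisymm
    · rintro e ⟨e', he', rfl⟩
      revert he'
      induction e' using Sym2.ind with
      | _ x y =>
        intro he'
        simpa using he'
    · intro e he
      induction e using Sym2.ind with
      | _ x y =>
        have hadj : H.Adj x y := he
        exact ⟨s(⟨x, H.edge_vert hadj⟩, ⟨y, H.edge_vert hadj.symm⟩), by simpa using hadj, by simp⟩
  rw [← himg, Set.ncard_image_of_injective _ (Sym2.map.injective Subtype.val_injective)]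

private lemma verts_ncard {V : Type} {G : SimpleGraph V} (H : G.Subgraph)
    [Fintype H.verts] : Fintype.card H.verts = H.verts.ncard := by
  rw [← Nat.card_eq_fintype_card, Nat.card_coe_set_eq]

private lemma subgraph_isTree_iff {V : Type} [Fintype V] {G : SimpleGraph V} (H : G.Subgraph) :
    H.coe.IsTree ↔ H.Connected ∧ H.edgeSet.ncard + 1 = H.verts.ncard := by
  haveI : Fintype H.verts := H.verts.toFinite.fintype
  constructor
  · intro h
    refine ⟨Subgraph.connected_iff'.mpr h.isConnected, ?_⟩
    have := tree_count h
    rwa [coe_edgeSet_ncard, verts_ncard] at this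
  · rintro ⟨hc, hcard⟩
    refine isTree_of_conn_card _ (Subgraph.connected_iff'.mp hc) ?_
    rwa [coe_edgeSet_ncard, verts_ncard]

private lemma connected_of_center {V : Type} {G : SimpleGraph V} {H : G.Subgraph} {c : V}
    (hc : c ∈ H.verts) (h : ∀ v ∈ H.verts, v ≠ c → H.Adj c v) : H.Connected := by
  rw [Subgraph.connected_iff']
  rw [connected_iff]
  refine ⟨?_, ⟨⟨c, hc⟩⟩⟩
  have key : ∀ v : H.verts, H.coe.Reachable v ⟨c, hc⟩ := by
    rintro ⟨v, hv⟩
    rcases eq_or_ne v c with rfl | hne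
    · exact Reachable.refl _
    · exact (Adj.reachable (by simpa using (h v hv hne).symm))
  intro u v
  exact (key u).trans (key v).symm

private lemma exists_adj_of_connected {V : Type} {G : SimpleGraph V} {H : G.Subgraph}
    (hH : H.Connected) {x y : V} (hx : x ∈ H.verts) (hy : y ∈ H.verts) (hxy : x ≠ y) :
    ∃ z, H.Adj x z := by
  obtain ⟨p⟩ := hH ⟨x, hx⟩ ⟨y, hy⟩
  cases p with
  | nil => exact absurd rfl hxy
  | cons h q => exact ⟨_, by simpa using h⟩

private lemma second_deg {V : Type} [Fintype V] {G : SimpleGraph V} {H : G.Subgraph}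
    {u0 u1 u2 v : H.verts} (h : H.coe.Adj u0 u1) (h' : H.coe.Adj u1 u2)
    (q : H.coe.Walk u2 v)
    (hp : (SimpleGraph.Walk.cons h (SimpleGraph.Walk.cons h' q)).IsPath) :
    2 ≤ subdeg H ↑u1 ∧ u1 ≠ v := by
  rw [Walk.cons_isPath_iff] at hp
  obtain ⟨hp1, hu0⟩ := hp
  rw [Walk.cons_isPath_iff] at hp1
  obtain ⟨hq, hu1⟩ := hp1
  have hne : u1 ≠ v := fun he => hu1 (he ▸ Walk.end_mem_support q)
  have h02 : u0 ≠ u2 := by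
    intro he
    apply hu0
    rw [Walk.support_cons]
    exact List.mem_cons_of_mem _ (he ▸ Walk.start_mem_support q)
  have hsub : ({(↑u0 : V), ↑u2} : Set V) ⊆ H.neighborSet ↑u1 := by
    intro z hz
    rcases hz with rfl | hz
    · exact h.symm
    · rw [Set.mem_singleton_iff] at hz
      subst hz
      exact h'
  have hle : ({(↑u0 : V), ↑u2} : Set V).ncard ≤ (H.neighborSet ↑u1).ncard :=
    Set.ncard_le_ncard hsub (Set.toFinite _)
  rw [Set.ncard_pair (fun he => h02 (Subtype.ext he))] at hle
  refine ⟨by rw [subdeg_eq]; omega, hne⟩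

private lemma star_structure {V : Type} [Fintype V] {G : SimpleGraph V} {H : G.Subgraph}
    (htree : H.coe.IsTree) (hsub : {v ∈ H.verts | 1 < subdeg H v}.Subsingleton)
    (hsize : 6 ≤ H.edgeSet.ncard) :
    ∃ c ∈ H.verts, (∀ v ∈ H.verts, v ≠ c → H.Adj c v) ∧
      (∀ x y, H.Adj x y → x = c ∨ y = c) ∧ H.edgeSet.ncard + 1 = H.verts.ncard := by
  obtain ⟨hconn, hcount⟩ := (subgraph_isTree_iff H).mp htree
  have hn7 : 7 ≤ H.verts.ncard := by omega
  have tool : ∀ (x y : H.verts), x ≠ y →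
      H.Adj ↑x ↑y ∨ ∃ d ∈ H.verts, 1 < subdeg H d ∧ d ≠ (↑y : V) := by
    intro x y hxy
    classical
    obtain ⟨w⟩ := hconn x y
    obtain ⟨p, hp⟩ := w.toPath
    obtain ⟨u1, h01, q, rfl⟩ := Walk.exists_eq_cons_of_ne hxy p
    rcases eq_or_ne u1 y with rfl | hne
    · exact Or.inl h01
    · obtain ⟨u2, h12, q', rfl⟩ := Walk.exists_eq_cons_of_ne hne q
      obtain ⟨hdeg, hney⟩ := second_deg h01 h12 q' hp
      exact Or.inr ⟨↑u1, u1.2, by omega, fun he => hney (Subtype.ext he)⟩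
  have hDne : {v ∈ H.verts | 1 < subdeg H v}.Nonempty := by
    rw [Set.nonempty_iff_ne_empty]
    intro hD
    have noDeg : ∀ v ∈ H.verts, ¬ 1 < subdeg H v := by
      intro v hv hdeg
      have : v ∈ {v ∈ H.verts | 1 < subdeg H v} := ⟨hv, hdeg⟩
      rw [hD] at this
      exact this
    obtain ⟨x, hx⟩ := Set.nonempty_of_ncard_ne_zero (by omega : H.verts.ncard ≠ 0)
    obtain ⟨y, hy, hyx⟩ := Set.exists_ne_of_one_lt_ncard (s := H.verts) (by omega) x
    have hzne : ¬ H.verts ⊆ {x, y} := by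
      intro hsubs
      have := Set.ncard_le_ncard hsubs (Set.toFinite _)
      have h2 : ({x, y} : Set V).ncard ≤ 2 := by
        rcases eq_or_ne x y with rfl | hne
        · simp
        · rw [Set.ncard_pair hne]
      omega
    obtain ⟨z, hz, hzxy⟩ := Set.not_subset.mp hzne
    have hzx : z ≠ x := fun he => hzxy (by rw [he]; exact Set.mem_insert _ _)
    have hzy : z ≠ y := fun he => hzxy (by rw [he]; exact Set.mem_insert_of_mem _ rfl)
    have haxy : H.Adj x y := by
      rcases tool ⟨x, hx⟩ ⟨y, hy⟩ (fun he => hyx (congrArg Subtype.val he).symm) with h | ⟨d, hd, hdeg, _⟩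
      · exact h
      · exact absurd hdeg (noDeg d hd)
    have haxz : H.Adj x z := by
      rcases tool ⟨x, hx⟩ ⟨z, hz⟩ (fun he => hzx (congrArg Subtype.val he).symm) with h | ⟨d, hd, hdeg, _⟩
      · exact h
      · exact absurd hdeg (noDeg d hd)
    have hsubn : ({y, z} : Set V) ⊆ H.neighborSet x := by
      intro t ht
      rcases ht with rfl | ht
      · exact haxy
      · rw [Set.mem_singleton_iff] at ht
        subst ht
        exact haxz
    have hle := Set.ncard_le_ncard hsubn (Set.toFinite _)
    rw [Set.ncard_pair (fun he => hzy he.symm)] at hle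
    rw [← subdeg_eq] at hle
    exact noDeg x hx (by omega)
  obtain ⟨c, hcv, hcdeg⟩ := hDne
  have claimB : ∀ v ∈ H.verts, v ≠ c → H.Adj c v := by
    intro v hv hvc
    rcases tool ⟨v, hv⟩ ⟨c, hcv⟩ (fun he => hvc (congrArg Subtype.val he)) with h | ⟨d, hd, hdeg, hdc⟩
    · exact h.symm
    · exact absurd (hsub ⟨hd, hdeg⟩ ⟨hcv, hcdeg⟩) hdc
  have claimA : ∀ x y, H.Adj x y → x = c ∨ y = c := by
    intro x y hxy
    by_contra hcon
    push_neg at hcon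
    obtain ⟨hxc, hyc⟩ := hcon
    have hcx : H.Adj c x := claimB x (H.edge_vert hxy) hxc
    have hsubn : ({y, c} : Set V) ⊆ H.neighborSet x := by
      intro t ht
      rcases ht with rfl | ht
      · exact hxy
      · rw [Set.mem_singleton_iff] at ht
        subst ht
        exact hcx.symm
    have hle := Set.ncard_le_ncard hsubn (Set.toFinite _)
    rw [Set.ncard_pair hyc] at hle
    rw [← subdeg_eq] at hle
    exact hxc (hsub ⟨H.edge_vert hxy, by omega⟩ ⟨hcv, hcdeg⟩)
  exact ⟨c, hcv, claimB, claimA, hcount⟩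

/-- Claim 2 of Lemma 5: with `G` connected, triangle-free, of minimum degree at least 3,
`S` a star-cover with stars of size at least 6, and `T` a tree in `G` of maximal size
subject to conditions (1)–(3), every vertex of `T` has at most one neighbour in `G` lying
outside `V(T)`. -/
theorem stmt_17 (V : Type) [Fintype V] (G : SimpleGraph V)
    (hconn : G.Connected) (htf : G.CliqueFree 3) (hdeg : ∀ v, 3 ≤ gdeg G v)
    (m : ℕ) (S : Fin m → G.Subgraph)
    (hstar : ∀ i, IsStar (S i)) (hsize : ∀ i, 6 ≤ (S i).edgeSet.ncard)
    (hdisj : ∀ i j, i ≠ j → Disjoint (S i).verts (S j).verts)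
    (hcov : ∀ w : V, ∃ i, w ∈ (S i).verts)
    (T : G.Subgraph) (hT : T.coe.IsTree)
    (h1 : ∀ a b : V, T.Adj a b → ¬(subdeg T a = 2 ∧ subdeg T b = 2))
    (h2 : ∃ I : Set (Fin m), T.vertsᶜ = ⋃ i ∈ I, (S i).verts)
    (h3 : ∀ a : V, subdeg T a = 1 → (∃ u, u ∉ T.verts ∧ G.Adj a u) →
      ∀ w, T.Adj a w → 5 ≤ subdeg T w)
    (hmax : ∀ T' : G.Subgraph, T'.coe.IsTree →
      (∀ a b : V, T'.Adj a b → ¬(subdeg T' a = 2 ∧ subdeg T' b = 2)) →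
      (∃ I : Set (Fin m), T'.vertsᶜ = ⋃ i ∈ I, (S i).verts) →
      (∀ a : V, subdeg T' a = 1 → (∃ u, u ∉ T'.verts ∧ G.Adj a u) →
        ∀ w, T'.Adj a w → 5 ≤ subdeg T' w) →
      T'.edgeSet.ncard ≤ T.edgeSet.ncard)
    :
    ∀ a ∈ T.verts, (G.neighborSet a \ T.verts).ncard ≤ 1 := by
  classical
  obtain ⟨I, hI⟩ := h2
  have hstars := fun i => star_structure (hstar i).1 (hstar i).2 (hsize i)
  choose ctr hctrv hctrB hctrA hcnt using hstars
  have hSoutside : ∀ i ∈ I, ∀ x ∈ (S i).verts, x ∉ T.verts := by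
    intro i hi x hx hxT
    have hmem : x ∈ T.vertsᶜ := by
      rw [hI]; exact Set.mem_biUnion hi hx
    exact hmem hxT
  have hfind : ∀ u, u ∉ T.verts → ∃ i ∈ I, u ∈ (S i).verts := by
    intro u hu
    have hm : u ∈ T.vertsᶜ := hu
    rw [hI] at hm
    simpa using hm
  have hTct := (subgraph_isTree_iff T).mp hT
  obtain ⟨hTconn, hTcount⟩ := hTct
  have hsize' : ∀ i, 7 ≤ (S i).verts.ncard := fun i => by
    have h1 := hcnt i; have h2 := hsize i; omega
  have hSconn : ∀ i, (S i).Connected := fun i =>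
    Subgraph.connected_iff'.mpr (hstar i).1.isConnected
  have hTbig : 7 ≤ T.verts.ncard := by
    obtain ⟨⟨v0, hv0⟩⟩ := hTconn.coe.nonempty
    obtain ⟨k, hk⟩ := hcov v0
    have hkI : k ∉ I := fun hkmem => (hSoutside k hkmem v0 hk) hv0
    have hsubset : (S k).verts ⊆ T.verts := by
      intro x hx
      by_contra hxT
      obtain ⟨j, hj, hxj⟩ := hfind x hxT
      have hjk : j ≠ k := fun he => hkI (he ▸ hj)
      exact Set.disjoint_left.mp (hdisj j k hjk) hxj hx
    calc 7 ≤ (S k).verts.ncard := hsize' k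
      _ ≤ T.verts.ncard := Set.ncard_le_ncard hsubset (Set.toFinite _)
  have hsub1 : ∀ v ∈ T.verts, 1 ≤ subdeg T v := by
    intro v hv
    obtain ⟨b, hb, hbv⟩ := Set.exists_ne_of_one_lt_ncard (s := T.verts) (by omega) v
    obtain ⟨z, hz⟩ := exists_adj_of_connected hTconn hv hb (fun he => hbv he.symm)
    rw [subdeg_eq]
    have hpos := (Set.ncard_pos (s := T.neighborSet v) (Set.toFinite _)).mpr ⟨z, hz⟩
    omega
  have hcompl : ∀ K : Set (Fin m), K ⊆ I →
      (T.verts ∪ ⋃ k ∈ K, (S k).verts)ᶜ = ⋃ i ∈ I \ K, (S i).verts := by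
    intro K hK
    ext x
    constructor
    · intro hx
      have hxT : x ∉ T.verts := fun h => hx (Or.inl h)
      obtain ⟨l, hl, hxl⟩ := hfind x hxT
      have hlK : l ∉ K := by
        intro hlK
        exact hx (Or.inr (Set.mem_biUnion hlK hxl))
      exact Set.mem_biUnion ⟨hl, hlK⟩ hxl
    · intro hx
      simp only [Set.mem_iUnion, exists_prop] at hx
      obtain ⟨l, ⟨hlI, hlK⟩, hxl⟩ := hx
      rintro (h | h)
      · exact hSoutside l hlI x hxl h
      · simp only [Set.mem_iUnion, exists_prop] at h
        obtain ⟨k, hkK, hxk⟩ := h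
        have hkl : k ≠ l := fun he => hlK (he ▸ hkK)
        exact Set.disjoint_left.mp (hdisj k l hkl) hxk hxl
  -- The augmentation lemma: attaching a suitable tree B to T at a single vertex a
  -- contradicts maximality of T.
  have AUG : ∀ a ∈ T.verts, ∀ B : G.Subgraph,
      B.Connected →
      B.edgeSet.ncard + 1 = B.verts.ncard →
      1 ≤ B.edgeSet.ncard →
      B.verts ∩ T.verts = {a} →
      (∃ I' : Set (Fin m), (T.verts ∪ B.verts)ᶜ = ⋃ i ∈ I', (S i).verts) →
      (∀ x y : V, B.Adj x y → ¬(subdeg T x + subdeg B x = 2 ∧ subdeg T y + subdeg B y = 2)) →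
      (∀ v ∈ B.verts, v ≠ a → subdeg B v = 1 →
        (∃ u, (u ∉ T.verts ∧ u ∉ B.verts) ∧ G.Adj v u) →
        ∀ w, B.Adj v w → 5 ≤ subdeg T w + subdeg B w) →
      False := by
    intro a ha B hBconn hBcount hBpos hBint hBcomp hH1 hH3
    have hdTa : 1 ≤ subdeg T a := hsub1 a ha
    have haB : a ∈ B.verts := by
      have hm : a ∈ B.verts ∩ T.verts := by rw [hBint]; rfl
      exact hm.1
    have hBout : ∀ v ∈ B.verts, v ≠ a → v ∉ T.verts := by
      intro v hv hva hvT
      apply hva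
      have hm : v ∈ B.verts ∩ T.verts := ⟨hv, hvT⟩
      rwa [hBint, Set.mem_singleton_iff] at hm
    have hTout : ∀ v ∈ T.verts, v ≠ a → v ∉ B.verts := by
      intro v hv hva hvB
      apply hva
      have hm : v ∈ B.verts ∩ T.verts := ⟨hvB, hv⟩
      rwa [hBint, Set.mem_singleton_iff] at hm
    have key : ∀ v, subdeg (T ⊔ B) v = subdeg T v + subdeg B v := by
      intro v
      have hdis : Disjoint (T.neighborSet v) (B.neighborSet v) := by
        rw [Set.disjoint_left]
        intro z hzT hzB
        have hvT := T.edge_vert hzT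
        have hzTv := T.edge_vert (T.adj_symm hzT)
        have hvB := B.edge_vert hzB
        have hzBv := B.edge_vert (B.adj_symm hzB)
        have hva : v = a := by
          have hm : v ∈ B.verts ∩ T.verts := ⟨hvB, hvT⟩
          rwa [hBint, Set.mem_singleton_iff] at hm
        have hza : z = a := by
          have hm : z ∈ B.verts ∩ T.verts := ⟨hzBv, hzTv⟩
          rwa [hBint, Set.mem_singleton_iff] at hm
        exact (T.adj_sub hzT).ne (by rw [hva, hza])
      rw [subdeg_eq, subdeg_eq, subdeg_eq, Subgraph.neighborSet_sup,
        Set.ncard_union_eq hdis (Set.toFinite _) (Set.toFinite _)]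
    have hdBa : 1 ≤ subdeg B a := by
      have hB2 : 2 ≤ B.verts.ncard := by omega
      obtain ⟨b, hb, hba⟩ := Set.exists_ne_of_one_lt_ncard (s := B.verts) (by omega) a
      obtain ⟨z, hz⟩ := exists_adj_of_connected hBconn haB hb (fun he => hba he.symm)
      rw [subdeg_eq]
      have hpos := (Set.ncard_pos (s := B.neighborSet a) (Set.toFinite _)).mpr ⟨z, hz⟩
      omega
    have hTedgedis : Disjoint T.edgeSet B.edgeSet := by
      rw [Set.disjoint_left]
      intro e
      induction e using Sym2.ind with
      | _ x y =>
        intro heT heB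
        have hxyT : T.Adj x y := heT
        have hxyB : B.Adj x y := heB
        have hx : x = a := by
          have hm : x ∈ B.verts ∩ T.verts := ⟨B.edge_vert hxyB, T.edge_vert hxyT⟩
          rwa [hBint, Set.mem_singleton_iff] at hm
        have hy : y = a := by
          have hm : y ∈ B.verts ∩ T.verts :=
            ⟨B.edge_vert (B.adj_symm hxyB), T.edge_vert (T.adj_symm hxyT)⟩
          rwa [hBint, Set.mem_singleton_iff] at hm
        exact (T.adj_sub hxyT).ne (by rw [hx, hy])
    have hedgesT' : (T ⊔ B).edgeSet.ncard = T.edgeSet.ncard + B.edgeSet.ncard := by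
      rw [Subgraph.edgeSet_sup, Set.ncard_union_eq hTedgedis (Set.toFinite _) (Set.toFinite _)]
    have hvcard : (T ⊔ B).verts.ncard + 1 = T.verts.ncard + B.verts.ncard := by
      have hint : T.verts ∩ B.verts = {a} := by rw [Set.inter_comm]; exact hBint
      have hu := Set.ncard_union_add_ncard_inter T.verts B.verts (Set.toFinite _) (Set.toFinite _)
      rw [hint, Set.ncard_singleton] at hu
      rw [Subgraph.verts_sup]
      omega
    have hT'tree : (T ⊔ B).coe.IsTree := by
      rw [subgraph_isTree_iff]
      constructor
      · exact Subgraph.Connected.sup hTconn hBconn ⟨a, by rw [Subgraph.verts_inf]; exact ⟨ha, haB⟩⟩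
      · omega
    have h1' : ∀ x y : V, (T ⊔ B).Adj x y → ¬(subdeg (T ⊔ B) x = 2 ∧ subdeg (T ⊔ B) y = 2) := by
      intro x y hxy hcontra
      obtain ⟨hx2, hy2⟩ := hcontra
      rw [key] at hx2 hy2
      rcases Subgraph.sup_adj.mp hxy with hxy | hxy
      · by_cases hxa : x = a
        · subst hxa
          have hdTx : subdeg T x = 1 := by omega
          have hne : (B.neighborSet x).Nonempty := by
            rw [← Set.ncard_pos (Set.toFinite _), ← subdeg_eq]
            omega
          obtain ⟨b, hb⟩ := hne
          have hbB : b ∈ B.verts := B.edge_vert (B.adj_symm hb)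
          have hba : b ≠ x := ((B.adj_sub hb).ne).symm
          have hbT : b ∉ T.verts := hBout b hbB hba
          have h5 := h3 x hdTx ⟨b, hbT, B.adj_sub hb⟩ y hxy
          omega
        · by_cases hya : y = a
          · subst hya
            have hdTy : subdeg T y = 1 := by omega
            have hne : (B.neighborSet y).Nonempty := by
              rw [← Set.ncard_pos (Set.toFinite _), ← subdeg_eq]
              omega
            obtain ⟨b, hb⟩ := hne
            have hbB : b ∈ B.verts := B.edge_vert (B.adj_symm hb)
            have hba : b ≠ y := ((B.adj_sub hb).ne).symm
            have hbT : b ∉ T.verts := hBout b hbB hba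
            have h5 := h3 y hdTy ⟨b, hbT, B.adj_sub hb⟩ x (T.adj_symm hxy)
            omega
          · have hxB : x ∉ B.verts := hTout x (T.edge_vert hxy) hxa
            have hyB : y ∉ B.verts := hTout y (T.edge_vert (T.adj_symm hxy)) hya
            rw [subdeg_zero B hxB] at hx2
            rw [subdeg_zero B hyB] at hy2
            exact h1 x y hxy ⟨by omega, by omega⟩
      · exact hH1 x y hxy ⟨hx2, hy2⟩
    have h2' : ∃ I' : Set (Fin m), (T ⊔ B).vertsᶜ = ⋃ i ∈ I', (S i).verts := by
      obtain ⟨I', hI'⟩ := hBcomp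
      refine ⟨I', ?_⟩
      rw [Subgraph.verts_sup]
      exact hI'
    have h3' : ∀ v : V, subdeg (T ⊔ B) v = 1 → (∃ u, u ∉ (T ⊔ B).verts ∧ G.Adj v u) →
        ∀ w, (T ⊔ B).Adj v w → 5 ≤ subdeg (T ⊔ B) w := by
      intro v hv1 hex w hw
      obtain ⟨u, huT', hadj⟩ := hex
      rw [Subgraph.verts_sup] at huT'
      have huT : u ∉ T.verts := fun h => huT' (Or.inl h)
      have huB : u ∉ B.verts := fun h => huT' (Or.inr h)
      rw [key] at hv1
      rw [key]
      by_cases hvT : v ∈ T.verts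
      · by_cases hva : v = a
        · subst hva
          have := hdTa
          have := hdBa
          omega
        · have hvB : v ∉ B.verts := hTout v hvT hva
          have hdBv : subdeg B v = 0 := subdeg_zero B hvB
          have hdTv : subdeg T v = 1 := by omega
          rcases Subgraph.sup_adj.mp hw with hw' | hw'
          · have h5 := h3 v hdTv ⟨u, huT, hadj⟩ w hw'
            omega
          · exact absurd (B.edge_vert hw') hvB
      · have hvB : v ∈ B.verts := by
          have hvm : v ∈ (T ⊔ B).verts := (T ⊔ B).edge_vert hw
          rw [Subgraph.verts_sup] at hvm
          rcases hvm with h | h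
          · exact absurd h hvT
          · exact h
        have hva : v ≠ a := fun he => hvT (he ▸ ha)
        have hdTv : subdeg T v = 0 := subdeg_zero T hvT
        rcases Subgraph.sup_adj.mp hw with hw' | hw'
        · exact absurd (T.edge_vert hw') hvT
        · have h5 := hH3 v hvB hva (by omega) ⟨u, ⟨huT, huB⟩, hadj⟩ w hw'
          omega
    have hle := hmax (T ⊔ B) hT'tree h1' h2' h3'
    omega
  -- neighbourhood structure of stars
  have hnbrC : ∀ i, (S i).neighborSet (ctr i) = (S i).verts \ {ctr i} := by
    intro i
    ext z
    constructor
    · intro hz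
      exact ⟨(S i).edge_vert ((S i).adj_symm hz), fun he => ((S i).adj_sub hz).ne
        (Set.mem_singleton_iff.mp he).symm⟩
    · rintro ⟨hzv, hz⟩
      exact hctrB i z hzv (fun he => hz (he ▸ rfl))
  have hnbrCcard : ∀ i, 6 ≤ ((S i).verts \ {ctr i}).ncard := by
    intro i
    rw [Set.ncard_diff_singleton_of_mem (hctrv i)]
    have := hsize' i
    omega
  have hnbrL : ∀ i, ∀ ℓ ∈ (S i).verts, ℓ ≠ ctr i → (S i).neighborSet ℓ = {ctr i} := by
    intro i ℓ hℓ hℓc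
    ext z
    constructor
    · intro hz
      rcases hctrA i ℓ z hz with rfl | rfl
      · exact absurd rfl hℓc
      · rfl
    · rintro rfl
      exact (S i).adj_symm (hctrB i ℓ hℓ hℓc)
  -- Construction 1 : attach one star via a single edge x–u.
  have C1 : ∀ x ∈ T.verts, ∀ u, u ∉ T.verts → ∀ i, i ∈ I → u ∈ (S i).verts →
      ∀ hadj : G.Adj x u, (2 ≤ subdeg T x ∨ u = ctr i) → False := by
    intro x hx u huT i hi hui hadj hcase
    set B := G.subgraphOfAdj hadj ⊔ S i with hBdef
    have hSiT : ∀ z ∈ (S i).verts, z ∉ T.verts := hSoutside i hi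
    have hxSi : x ∉ (S i).verts := fun h => hSiT x h hx
    have hxc : x ≠ ctr i := fun he => hxSi (he ▸ hctrv i)
    have hBverts : B.verts = insert x (S i).verts := by
      rw [hBdef, Subgraph.verts_sup, subgraphOfAdj_verts, Set.insert_union,
        Set.singleton_union, Set.insert_eq_self.mpr hui]
    have hBint : B.verts ∩ T.verts = {x} := by
      rw [hBverts]
      ext z
      constructor
      · rintro ⟨hz1, hz2⟩
        rcases hz1 with rfl | hz1
        · rfl
        · exact absurd hz2 (hSiT z hz1)
      · rintro rfl
        exact ⟨Set.mem_insert _ _, hx⟩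
    have hsxu : s(x,u) ∉ (S i).edgeSet := by
      intro hmem
      exact hxSi ((S i).edge_vert (Subgraph.mem_edgeSet.mp hmem))
    have hBecard : B.edgeSet.ncard = (S i).edgeSet.ncard + 1 := by
      rw [hBdef, Subgraph.edgeSet_sup, edgeSet_subgraphOfAdj, Set.singleton_union,
        Set.ncard_insert_of_notMem hsxu (Set.toFinite _)]
    have hBvcard : B.verts.ncard = (S i).verts.ncard + 1 := by
      rw [hBverts, Set.ncard_insert_of_notMem hxSi (Set.toFinite _)]
    have hBconn : B.Connected := by
      apply Subgraph.Connected.sup (Subgraph.subgraphOfAdj_connected hadj) (hSconn i)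
      exact ⟨u, by rw [Subgraph.verts_inf, subgraphOfAdj_verts]; exact ⟨Or.inr rfl, hui⟩⟩
    have hdB : ∀ v, subdeg B v =
        ((G.subgraphOfAdj hadj).neighborSet v ∪ (S i).neighborSet v).ncard := by
      intro v
      rw [subdeg_eq, hBdef, Subgraph.neighborSet_sup]
    have hdBx : subdeg B x = 1 := by
      rw [hdB, neighborSet_fst_subgraphOfAdj, nbr_empty (S i) hxSi, Set.union_empty,
        Set.ncard_singleton]
    have hdBc : 6 ≤ subdeg B (ctr i) := by
      rw [hdB]
      calc 6 ≤ ((S i).verts \ {ctr i}).ncard := hnbrCcard i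
        _ ≤ _ := by
          rw [← hnbrC i]
          exact Set.ncard_le_ncard Set.subset_union_right (Set.toFinite _)
    have hH1 : ∀ p q : V, B.Adj p q →
        ¬(subdeg T p + subdeg B p = 2 ∧ subdeg T q + subdeg B q = 2) := by
      intro p q hpq hcon
      obtain ⟨hp2, hq2⟩ := hcon
      rcases Subgraph.sup_adj.mp hpq with hpq | hpq
      · rw [subgraphOfAdj_adj, Sym2.eq_iff] at hpq
        rcases hcase with hdeg2 | rfl
        · rcases hpq with ⟨rfl, rfl⟩ | ⟨rfl, rfl⟩
          · rw [hdBx] at hp2; omega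
          · rw [hdBx] at hq2; omega
        · rcases hpq with ⟨rfl, rfl⟩ | ⟨rfl, rfl⟩
          · omega
          · omega
      · rcases hctrA i p q hpq with rfl | rfl
        · omega
        · omega
    have hH3 : ∀ v ∈ B.verts, v ≠ x → subdeg B v = 1 →
        (∃ uu, (uu ∉ T.verts ∧ uu ∉ B.verts) ∧ G.Adj v uu) →
        ∀ w, B.Adj v w → 5 ≤ subdeg T w + subdeg B w := by
      intro v hv hvx hdv _hex w hw
      have hvSi : v ∈ (S i).verts := by
        rw [hBverts] at hv
        rcases hv with rfl | h
        · exact absurd rfl hvx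
        · exact h
      have hvc : v ≠ ctr i := by
        rintro rfl
        omega
      have hvu : v ≠ u := by
        rintro rfl
        have : subdeg B v = 2 := by
          rw [hdB, neighborSet_snd_subgraphOfAdj, hnbrL i v hvSi hvc,
            Set.singleton_union, Set.ncard_pair hxc]
        omega
      have hwadj : (S i).Adj v w := by
        rcases Subgraph.sup_adj.mp hw with hw' | hw'
        · rw [subgraphOfAdj_adj, Sym2.eq_iff] at hw'
          rcases hw' with ⟨rfl, rfl⟩ | ⟨rfl, rfl⟩
          · exact absurd rfl hvx
          · exact absurd rfl hvu
        · exact hw'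
      have hwc : w = ctr i := by
        rcases hctrA i v w hwadj with rfl | rfl
        · exact absurd rfl hvc
        · rfl
      subst hwc
      omega
    have hcomp : ∃ I' : Set (Fin m), (T.verts ∪ B.verts)ᶜ = ⋃ k ∈ I', (S k).verts := by
      refine ⟨I \ {i}, ?_⟩
      have hTB : T.verts ∪ B.verts = T.verts ∪ ⋃ k ∈ ({i} : Set (Fin m)), (S k).verts := by
        rw [hBverts, Set.biUnion_singleton, Set.union_insert,
          Set.insert_eq_self.mpr (Set.mem_union_left _ hx)]
      rw [hTB, hcompl {i} (by simpa using hi)]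
    exact AUG x hx B hBconn (by have := hcnt i; omega) (by have := hsize i; omega)
      hBint hcomp hH1 hH3
  have hedge_dis : ∀ i j, i ≠ j → Disjoint (S i).edgeSet (S j).edgeSet := by
    intro i j hij
    rw [Set.disjoint_left]
    intro e
    induction e using Sym2.ind with
    | _ p q =>
      intro hpi hpj
      exact Set.disjoint_left.mp (hdisj i j hij)
        ((S i).edge_vert (Subgraph.mem_edgeSet.mp hpi))
        ((S j).edge_vert (Subgraph.mem_edgeSet.mp hpj))
  have hSnbr_ne : ∀ i, ∀ v ∈ (S i).verts, ((S i).neighborSet v).Nonempty := by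
    intro i v hv
    obtain ⟨b, hb, hbv⟩ := Set.exists_ne_of_one_lt_ncard (s := (S i).verts)
      (by have := hsize' i; omega) v
    obtain ⟨z, hz⟩ := exists_adj_of_connected (hSconn i) hv hb (fun he => hbv he.symm)
    exact ⟨z, hz⟩
  -- Construction 3 : attach two distinct stars to a vertex a via edges a–u1 and a–u2.
  have C3 : ∀ a ∈ T.verts, ∀ u1 u2, u1 ∉ T.verts → u2 ∉ T.verts →
      ∀ i j, i ∈ I → j ∈ I → i ≠ j → u1 ∈ (S i).verts → u2 ∈ (S j).verts →
      ∀ (hadj1 : G.Adj a u1) (hadj2 : G.Adj a u2), False := by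
    intro a ha u1 u2 hu1T hu2T i j hi hj hij hu1i hu2j hadj1 hadj2
    set B := ((G.subgraphOfAdj hadj1 ⊔ G.subgraphOfAdj hadj2) ⊔ S i) ⊔ S j with hBdef
    have hSiT : ∀ z ∈ (S i).verts, z ∉ T.verts := hSoutside i hi
    have hSjT : ∀ z ∈ (S j).verts, z ∉ T.verts := hSoutside j hj
    have haSi : a ∉ (S i).verts := fun h => hSiT a h ha
    have haSj : a ∉ (S j).verts := fun h => hSjT a h ha
    have hu1Sj : u1 ∉ (S j).verts := fun h => Set.disjoint_left.mp (hdisj i j hij) hu1i h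
    have hu2Si : u2 ∉ (S i).verts := fun h => Set.disjoint_left.mp (hdisj i j hij) h hu2j
    have hu1u2 : u1 ≠ u2 := fun he => hu2Si (he ▸ hu1i)
    have hau1 : a ≠ u1 := hadj1.ne
    have hau2 : a ≠ u2 := hadj2.ne
    have hBverts : B.verts = insert a ((S i).verts ∪ (S j).verts) := by
      rw [hBdef]
      simp only [Subgraph.verts_sup, subgraphOfAdj_verts]
      ext z
      simp only [Set.mem_union, Set.mem_insert_iff, Set.mem_singleton_iff]
      constructor
      · rintro (((h | h) | h) | h)
        · rcases h with rfl | rfl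
          · exact Or.inl rfl
          · exact Or.inr (Or.inl hu1i)
        · rcases h with rfl | rfl
          · exact Or.inl rfl
          · exact Or.inr (Or.inr hu2j)
        · exact Or.inr (Or.inl h)
        · exact Or.inr (Or.inr h)
      · rintro (rfl | (h | h))
        · exact Or.inl (Or.inl (Or.inl (Or.inl rfl)))
        · exact Or.inl (Or.inr h)
        · exact Or.inr h
    have hBint : B.verts ∩ T.verts = {a} := by
      rw [hBverts]
      ext z
      constructor
      · rintro ⟨hz1, hz2⟩
        rcases hz1 with rfl | (hz1 | hz1)
        · rfl
        · exact absurd hz2 (hSiT z hz1)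
        · exact absurd hz2 (hSjT z hz1)
      · rintro rfl
        exact ⟨Set.mem_insert _ _, ha⟩
    have hBedges : B.edgeSet = insert s(a,u1) (insert s(a,u2)
        ((S i).edgeSet ∪ (S j).edgeSet)) := by
      rw [hBdef]
      simp only [Subgraph.edgeSet_sup, edgeSet_subgraphOfAdj]
      ext e
      simp only [Set.mem_union, Set.mem_insert_iff, Set.mem_singleton_iff]
      tauto
    have hne12 : s(a,u1) ≠ s(a,u2) := by
      intro he
      rw [Sym2.eq_iff] at he
      rcases he with ⟨_, h⟩ | ⟨h1, h2⟩
      · exact hu1u2 h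
      · exact hau2 h1
    have hmem1 : s(a,u1) ∉ (S i).edgeSet ∪ (S j).edgeSet := by
      rintro (h | h)
      · exact haSi ((S i).edge_vert (Subgraph.mem_edgeSet.mp h))
      · exact haSj ((S j).edge_vert (Subgraph.mem_edgeSet.mp h))
    have hmem2 : s(a,u2) ∉ (S i).edgeSet ∪ (S j).edgeSet := by
      rintro (h | h)
      · exact haSi ((S i).edge_vert (Subgraph.mem_edgeSet.mp h))
      · exact haSj ((S j).edge_vert (Subgraph.mem_edgeSet.mp h))
    have hBecard : B.edgeSet.ncard = (S i).edgeSet.ncard + (S j).edgeSet.ncard + 2 := by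
      rw [hBedges, Set.ncard_insert_of_notMem (by
          intro h
          rcases h with h | h
          · exact hne12 h
          · exact hmem1 h) (Set.toFinite _),
        Set.ncard_insert_of_notMem hmem2 (Set.toFinite _),
        Set.ncard_union_eq (hedge_dis i j hij) (Set.toFinite _) (Set.toFinite _)]
    have hBvcard : B.verts.ncard = (S i).verts.ncard + (S j).verts.ncard + 1 := by
      rw [hBverts, Set.ncard_insert_of_notMem (by
          rintro (h | h)
          · exact haSi h
          · exact haSj h) (Set.toFinite _),
        Set.ncard_union_eq (hdisj i j hij) (Set.toFinite _) (Set.toFinite _)]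
    have hBconn : B.Connected := by
      apply Subgraph.Connected.sup _ (hSconn j)
      · exact ⟨u2, by
          rw [Subgraph.verts_inf]
          constructor
          · rw [Subgraph.verts_sup, Subgraph.verts_sup, subgraphOfAdj_verts, subgraphOfAdj_verts]
            exact Or.inl (Or.inr (Or.inr rfl))
          · exact hu2j⟩
      apply Subgraph.Connected.sup _ (hSconn i)
      · exact ⟨u1, by
          rw [Subgraph.verts_inf]
          constructor
          · rw [Subgraph.verts_sup, subgraphOfAdj_verts, subgraphOfAdj_verts]
            exact Or.inl (Or.inr rfl)
          · exact hu1i⟩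
      apply Subgraph.Connected.sup (Subgraph.subgraphOfAdj_connected hadj1)
        (Subgraph.subgraphOfAdj_connected hadj2)
      exact ⟨a, by
        rw [Subgraph.verts_inf, subgraphOfAdj_verts, subgraphOfAdj_verts]
        exact ⟨Or.inl rfl, Or.inl rfl⟩⟩
    have hdB : ∀ v, subdeg B v =
        ((((G.subgraphOfAdj hadj1).neighborSet v ∪ (G.subgraphOfAdj hadj2).neighborSet v) ∪
          (S i).neighborSet v) ∪ (S j).neighborSet v).ncard := by
      intro v
      rw [subdeg_eq, hBdef, Subgraph.neighborSet_sup, Subgraph.neighborSet_sup,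
        Subgraph.neighborSet_sup]
    have hdBa : subdeg B a = 2 := by
      rw [hdB, neighborSet_fst_subgraphOfAdj, neighborSet_fst_subgraphOfAdj,
        nbr_empty (S i) haSi, nbr_empty (S j) haSj, Set.union_empty, Set.union_empty,
        Set.singleton_union, Set.ncard_pair hu1u2]
    have hdBci : 6 ≤ subdeg B (ctr i) := by
      rw [hdB]
      calc 6 ≤ ((S i).verts \ {ctr i}).ncard := hnbrCcard i
        _ ≤ _ := by
          rw [← hnbrC i]
          exact Set.ncard_le_ncard (fun z hz =>
            Or.inl (Or.inr hz)) (Set.toFinite _)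
    have hdBcj : 6 ≤ subdeg B (ctr j) := by
      rw [hdB]
      calc 6 ≤ ((S j).verts \ {ctr j}).ncard := hnbrCcard j
        _ ≤ _ := by
          rw [← hnbrC j]
          exact Set.ncard_le_ncard (fun z hz => Or.inr hz) (Set.toFinite _)
    have hBadj : ∀ p q : V, B.Adj p q ↔
        ((s(a,u1) = s(p,q) ∨ s(a,u2) = s(p,q)) ∨ (S i).Adj p q) ∨ (S j).Adj p q := by
      intro p q
      rw [hBdef]
      simp only [Subgraph.sup_adj, subgraphOfAdj_adj]
    have hH1 : ∀ p q : V, B.Adj p q →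
        ¬(subdeg T p + subdeg B p = 2 ∧ subdeg T q + subdeg B q = 2) := by
      intro p q hpq hcon
      obtain ⟨hp2, hq2⟩ := hcon
      have hdTa1 := hsub1 a ha
      rcases (hBadj p q).mp hpq with ((hpq | hpq) | hpq) | hpq
      · rw [Sym2.eq_iff] at hpq
        rcases hpq with ⟨rfl, rfl⟩ | ⟨rfl, rfl⟩
        · omega
        · omega
      · rw [Sym2.eq_iff] at hpq
        rcases hpq with ⟨rfl, rfl⟩ | ⟨rfl, rfl⟩
        · omega
        · omega
      · rcases hctrA i p q hpq with rfl | rfl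
        · omega
        · omega
      · rcases hctrA j p q hpq with rfl | rfl
        · omega
        · omega
    have hH3 : ∀ v ∈ B.verts, v ≠ a → subdeg B v = 1 →
        (∃ uu, (uu ∉ T.verts ∧ uu ∉ B.verts) ∧ G.Adj v uu) →
        ∀ w, B.Adj v w → 5 ≤ subdeg T w + subdeg B w := by
      intro v hv hva hdv _hex w hw
      rw [hBverts] at hv
      rcases hv with rfl | (hvSi | hvSj)
      · exact absurd rfl hva
      · have hvc : v ≠ ctr i := by
          rintro rfl
          omega
        have hvu1 : v ≠ u1 := by
          rintro rfl
          obtain ⟨z, hz⟩ := hSnbr_ne i v hvSi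
          have hzv : z ∈ (S i).verts := (S i).edge_vert ((S i).adj_symm hz)
          have haz : a ≠ z := fun he => haSi (he ▸ hzv)
          have hsubn : ({a, z} : Set V) ⊆ (((G.subgraphOfAdj hadj1).neighborSet v ∪
              (G.subgraphOfAdj hadj2).neighborSet v) ∪ (S i).neighborSet v) ∪
              (S j).neighborSet v := by
            intro t ht
            rcases ht with rfl | ht
            · refine Or.inl (Or.inl (Or.inl ?_))
              rw [neighborSet_snd_subgraphOfAdj]
              rfl
            · rw [Set.mem_singleton_iff] at ht
              subst ht
              exact Or.inl (Or.inr hz)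
          have hle := Set.ncard_le_ncard hsubn (Set.toFinite _)
          rw [Set.ncard_pair haz] at hle
          rw [hdB] at hdv
          omega
        have hvu2 : v ≠ u2 := fun he => hu2Si (he ▸ hvSi)
        have hwadj : (S i).Adj v w := by
          rcases (hBadj v w).mp hw with ((hw' | hw') | hw') | hw'
          · rw [Sym2.eq_iff] at hw'
            rcases hw' with ⟨rfl, rfl⟩ | ⟨rfl, rfl⟩
            · exact absurd rfl hva
            · exact absurd rfl hvu1
          · rw [Sym2.eq_iff] at hw'
            rcases hw' with ⟨rfl, rfl⟩ | ⟨rfl, rfl⟩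
            · exact absurd rfl hva
            · exact absurd rfl hvu2
          · exact hw'
          · exact absurd ((S j).edge_vert hw') (fun h =>
              Set.disjoint_left.mp (hdisj i j hij) hvSi h)
        have hwc : w = ctr i := by
          rcases hctrA i v w hwadj with rfl | rfl
          · exact absurd rfl hvc
          · rfl
        subst hwc
        omega
      · have hvc : v ≠ ctr j := by
          rintro rfl
          omega
        have hvu2 : v ≠ u2 := by
          rintro rfl
          obtain ⟨z, hz⟩ := hSnbr_ne j v hvSj
          have hzv : z ∈ (S j).verts := (S j).edge_vert ((S j).adj_symm hz)
          have haz : a ≠ z := fun he => haSj (he ▸ hzv)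
          have hsubn : ({a, z} : Set V) ⊆ (((G.subgraphOfAdj hadj1).neighborSet v ∪
              (G.subgraphOfAdj hadj2).neighborSet v) ∪ (S i).neighborSet v) ∪
              (S j).neighborSet v := by
            intro t ht
            rcases ht with rfl | ht
            · refine Or.inl (Or.inl (Or.inr ?_))
              rw [neighborSet_snd_subgraphOfAdj]
              rfl
            · rw [Set.mem_singleton_iff] at ht
              subst ht
              exact Or.inr hz
          have hle := Set.ncard_le_ncard hsubn (Set.toFinite _)
          rw [Set.ncard_pair haz] at hle
          rw [hdB] at hdv
          omega
        have hvu1 : v ≠ u1 := fun he => hu1Sj (he ▸ hvSj)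
        have hwadj : (S j).Adj v w := by
          rcases (hBadj v w).mp hw with ((hw' | hw') | hw') | hw'
          · rw [Sym2.eq_iff] at hw'
            rcases hw' with ⟨rfl, rfl⟩ | ⟨rfl, rfl⟩
            · exact absurd rfl hva
            · exact absurd rfl hvu1
          · rw [Sym2.eq_iff] at hw'
            rcases hw' with ⟨rfl, rfl⟩ | ⟨rfl, rfl⟩
            · exact absurd rfl hva
            · exact absurd rfl hvu2
          · exact absurd ((S i).edge_vert hw') (fun h =>
              Set.disjoint_left.mp (hdisj i j hij) h hvSj)
          · exact hw'
        have hwc : w = ctr j := by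
          rcases hctrA j v w hwadj with rfl | rfl
          · exact absurd rfl hvc
          · rfl
        subst hwc
        omega
    have hcomp : ∃ I' : Set (Fin m), (T.verts ∪ B.verts)ᶜ = ⋃ k ∈ I', (S k).verts := by
      refine ⟨I \ {i, j}, ?_⟩
      have hTB : T.verts ∪ B.verts = T.verts ∪ ⋃ k ∈ ({i, j} : Set (Fin m)), (S k).verts := by
        rw [hBverts, Set.biUnion_pair, Set.union_insert,
          Set.insert_eq_self.mpr (Set.mem_union_left _ ha)]
      rw [hTB, hcompl {i, j} (by
        rintro k (rfl | hk)
        · exact hi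
        · rw [Set.mem_singleton_iff] at hk
          exact hk ▸ hj)]
    exact AUG a ha B hBconn (by have := hcnt i; have := hcnt j; omega)
      (by omega) hBint hcomp hH1 hH3
  -- Construction 4 : a–x into star i, and x–y into another star j.
  have C4 : ∀ a ∈ T.verts, ∀ x y : V, x ∉ T.verts → y ∉ T.verts →
      ∀ i j, i ∈ I → j ∈ I → i ≠ j → x ∈ (S i).verts → x ≠ ctr i → y ∈ (S j).verts →
      ∀ (hadj1 : G.Adj a x) (hadj2 : G.Adj x y), False := by
    intro a ha x y hxT hyT i j hi hj hij hxi hxc hyj hadj1 hadj2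
    set B := ((G.subgraphOfAdj hadj1 ⊔ S i) ⊔ G.subgraphOfAdj hadj2) ⊔ S j with hBdef
    have hSiT : ∀ z ∈ (S i).verts, z ∉ T.verts := hSoutside i hi
    have hSjT : ∀ z ∈ (S j).verts, z ∉ T.verts := hSoutside j hj
    have haSi : a ∉ (S i).verts := fun h => hSiT a h ha
    have haSj : a ∉ (S j).verts := fun h => hSjT a h ha
    have hxSj : x ∉ (S j).verts := fun h => Set.disjoint_left.mp (hdisj i j hij) hxi h
    have hySi : y ∉ (S i).verts := fun h => Set.disjoint_left.mp (hdisj i j hij) h hyj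
    have hax : a ≠ x := hadj1.ne
    have hxy : x ≠ y := hadj2.ne
    have hay : a ≠ y := fun he => hyT (he ▸ ha)
    have hBverts : B.verts = insert a ((S i).verts ∪ (S j).verts) := by
      rw [hBdef]
      simp only [Subgraph.verts_sup, subgraphOfAdj_verts]
      ext z
      simp only [Set.mem_union, Set.mem_insert_iff, Set.mem_singleton_iff]
      constructor
      · rintro (((h | h) | h) | h)
        · rcases h with rfl | rfl
          · exact Or.inl rfl
          · exact Or.inr (Or.inl hxi)
        · exact Or.inr (Or.inl h)
        · rcases h with rfl | rfl
          · exact Or.inr (Or.inl hxi)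
          · exact Or.inr (Or.inr hyj)
        · exact Or.inr (Or.inr h)
      · rintro (rfl | (h | h))
        · exact Or.inl (Or.inl (Or.inl (Or.inl rfl)))
        · exact Or.inl (Or.inl (Or.inr h))
        · exact Or.inr h
    have hBint : B.verts ∩ T.verts = {a} := by
      rw [hBverts]
      ext z
      constructor
      · rintro ⟨hz1, hz2⟩
        rcases hz1 with rfl | (hz1 | hz1)
        · rfl
        · exact absurd hz2 (hSiT z hz1)
        · exact absurd hz2 (hSjT z hz1)
      · rintro rfl
        exact ⟨Set.mem_insert _ _, ha⟩
    have hBedges : B.edgeSet = insert s(a,x) (insert s(x,y)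
        ((S i).edgeSet ∪ (S j).edgeSet)) := by
      rw [hBdef]
      simp only [Subgraph.edgeSet_sup, edgeSet_subgraphOfAdj]
      ext e
      simp only [Set.mem_union, Set.mem_insert_iff, Set.mem_singleton_iff]
      tauto
    have hne12 : s(a,x) ≠ s(x,y) := by
      intro he
      rw [Sym2.eq_iff] at he
      rcases he with ⟨rfl, h⟩ | ⟨h1, h2⟩
      · exact hxy h
      · exact hay h1
    have hmem1 : s(a,x) ∉ (S i).edgeSet ∪ (S j).edgeSet := by
      rintro (h | h)
      · exact haSi ((S i).edge_vert (Subgraph.mem_edgeSet.mp h))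
      · exact haSj ((S j).edge_vert (Subgraph.mem_edgeSet.mp h))
    have hmem2 : s(x,y) ∉ (S i).edgeSet ∪ (S j).edgeSet := by
      rintro (h | h)
      · exact hySi ((S i).edge_vert ((S i).adj_symm (Subgraph.mem_edgeSet.mp h)))
      · exact hxSj ((S j).edge_vert (Subgraph.mem_edgeSet.mp h))
    have hBecard : B.edgeSet.ncard = (S i).edgeSet.ncard + (S j).edgeSet.ncard + 2 := by
      rw [hBedges, Set.ncard_insert_of_notMem (by
          intro h
          rcases h with h | h
          · exact hne12 h
          · exact hmem1 h) (Set.toFinite _),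
        Set.ncard_insert_of_notMem hmem2 (Set.toFinite _),
        Set.ncard_union_eq (hedge_dis i j hij) (Set.toFinite _) (Set.toFinite _)]
    have hBvcard : B.verts.ncard = (S i).verts.ncard + (S j).verts.ncard + 1 := by
      rw [hBverts, Set.ncard_insert_of_notMem (by
          rintro (h | h)
          · exact haSi h
          · exact haSj h) (Set.toFinite _),
        Set.ncard_union_eq (hdisj i j hij) (Set.toFinite _) (Set.toFinite _)]
    have hBconn : B.Connected := by
      apply Subgraph.Connected.sup _ (hSconn j)
      · exact ⟨y, by
          rw [Subgraph.verts_inf]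
          constructor
          · rw [Subgraph.verts_sup, Subgraph.verts_sup, subgraphOfAdj_verts, subgraphOfAdj_verts]
            exact Or.inr (Or.inr rfl)
          · exact hyj⟩
      apply Subgraph.Connected.sup _ (Subgraph.subgraphOfAdj_connected hadj2)
      · exact ⟨x, by
          rw [Subgraph.verts_inf, Subgraph.verts_sup, subgraphOfAdj_verts, subgraphOfAdj_verts]
          exact ⟨Or.inl (Or.inr rfl), Or.inl rfl⟩⟩
      apply Subgraph.Connected.sup (Subgraph.subgraphOfAdj_connected hadj1) (hSconn i)
      exact ⟨x, by
        rw [Subgraph.verts_inf, subgraphOfAdj_verts]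
        exact ⟨Or.inr rfl, hxi⟩⟩
    have hdB : ∀ v, subdeg B v =
        ((((G.subgraphOfAdj hadj1).neighborSet v ∪ (S i).neighborSet v) ∪
          (G.subgraphOfAdj hadj2).neighborSet v) ∪ (S j).neighborSet v).ncard := by
      intro v
      rw [subdeg_eq, hBdef, Subgraph.neighborSet_sup, Subgraph.neighborSet_sup,
        Subgraph.neighborSet_sup]
    have hdTx0 : subdeg T x = 0 := subdeg_zero T hxT
    have hdBa : subdeg B a = 1 := by
      rw [hdB, neighborSet_fst_subgraphOfAdj, nbr_empty (S i) haSi,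
        neighborSet_subgraphOfAdj_of_ne_of_ne hadj2 hax hay, nbr_empty (S j) haSj,
        Set.union_empty, Set.union_empty, Set.union_empty, Set.ncard_singleton]
    have hdBx : subdeg B x = 3 := by
      rw [hdB, neighborSet_snd_subgraphOfAdj, hnbrL i x hxi hxc,
        neighborSet_fst_subgraphOfAdj, nbr_empty (S j) hxSj, Set.union_empty]
      have : ({a} ∪ {ctr i} ∪ {y} : Set V) = {a, ctr i, y} := by
        ext t
        simp only [Set.mem_union, Set.mem_insert_iff, Set.mem_singleton_iff]
        tauto
      rw [this]
      have hac : a ≠ ctr i := fun he => haSi (he ▸ hctrv i)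
      have hcy : ctr i ≠ y := fun he => hySi (he ▸ hctrv i)
      rw [Set.ncard_insert_of_notMem (by
          rintro (h | h)
          · exact hac h
          · rw [Set.mem_singleton_iff] at h
            exact hay h) (Set.toFinite _), Set.ncard_pair hcy]
    have hdBci : 6 ≤ subdeg B (ctr i) := by
      rw [hdB]
      calc 6 ≤ ((S i).verts \ {ctr i}).ncard := hnbrCcard i
        _ ≤ _ := by
          rw [← hnbrC i]
          exact Set.ncard_le_ncard (fun z hz => Or.inl (Or.inl (Or.inr hz))) (Set.toFinite _)
    have hdBcj : 6 ≤ subdeg B (ctr j) := by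
      rw [hdB]
      calc 6 ≤ ((S j).verts \ {ctr j}).ncard := hnbrCcard j
        _ ≤ _ := by
          rw [← hnbrC j]
          exact Set.ncard_le_ncard (fun z hz => Or.inr hz) (Set.toFinite _)
    have hBadj : ∀ p q : V, B.Adj p q ↔
        ((s(a,x) = s(p,q) ∨ (S i).Adj p q) ∨ s(x,y) = s(p,q)) ∨ (S j).Adj p q := by
      intro p q
      rw [hBdef]
      simp only [Subgraph.sup_adj, subgraphOfAdj_adj]
    have hH1 : ∀ p q : V, B.Adj p q →
        ¬(subdeg T p + subdeg B p = 2 ∧ subdeg T q + subdeg B q = 2) := by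
      intro p q hpq hcon
      obtain ⟨hp2, hq2⟩ := hcon
      rcases (hBadj p q).mp hpq with ((hpq | hpq) | hpq) | hpq
      · rw [Sym2.eq_iff] at hpq
        rcases hpq with ⟨rfl, rfl⟩ | ⟨rfl, rfl⟩
        · omega
        · omega
      · rcases hctrA i p q hpq with rfl | rfl
        · omega
        · omega
      · rw [Sym2.eq_iff] at hpq
        rcases hpq with ⟨rfl, rfl⟩ | ⟨rfl, rfl⟩
        · omega
        · omega
      · rcases hctrA j p q hpq with rfl | rfl
        · omega
        · omega
    have hH3 : ∀ v ∈ B.verts, v ≠ a → subdeg B v = 1 →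
        (∃ uu, (uu ∉ T.verts ∧ uu ∉ B.verts) ∧ G.Adj v uu) →
        ∀ w, B.Adj v w → 5 ≤ subdeg T w + subdeg B w := by
      intro v hv hva hdv _hex w hw
      rw [hBverts] at hv
      rcases hv with rfl | (hvSi | hvSj)
      · exact absurd rfl hva
      · have hvc : v ≠ ctr i := by
          rintro rfl
          omega
        have hvx : v ≠ x := by
          rintro rfl
          omega
        have hvy : v ≠ y := fun he => hySi (he ▸ hvSi)
        have hwadj : (S i).Adj v w := by
          rcases (hBadj v w).mp hw with ((hw' | hw') | hw') | hw'
          · rw [Sym2.eq_iff] at hw'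
            rcases hw' with ⟨rfl, rfl⟩ | ⟨rfl, rfl⟩
            · exact absurd rfl hva
            · exact absurd rfl hvx
          · exact hw'
          · rw [Sym2.eq_iff] at hw'
            rcases hw' with ⟨rfl, rfl⟩ | ⟨rfl, rfl⟩
            · exact absurd rfl hvx
            · exact absurd rfl hvy
          · exact absurd ((S j).edge_vert hw') (fun h =>
              Set.disjoint_left.mp (hdisj i j hij) hvSi h)
        have hwc : w = ctr i := by
          rcases hctrA i v w hwadj with rfl | rfl
          · exact absurd rfl hvc
          · rfl
        subst hwc
        omega
      · have hvc : v ≠ ctr j := by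
          rintro rfl
          omega
        have hvy : v ≠ y := by
          rintro rfl
          obtain ⟨z, hz⟩ := hSnbr_ne j v hvSj
          have hzv : z ∈ (S j).verts := (S j).edge_vert ((S j).adj_symm hz)
          have hxz : x ≠ z := fun he => hxSj (he ▸ hzv)
          have hsubn : ({x, z} : Set V) ⊆ (((G.subgraphOfAdj hadj1).neighborSet v ∪
              (S i).neighborSet v) ∪ (G.subgraphOfAdj hadj2).neighborSet v) ∪
              (S j).neighborSet v := by
            intro t ht
            rcases ht with rfl | ht
            · refine Or.inl (Or.inr ?_)
              rw [neighborSet_snd_subgraphOfAdj]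
              rfl
            · rw [Set.mem_singleton_iff] at ht
              subst ht
              exact Or.inr hz
          have hle := Set.ncard_le_ncard hsubn (Set.toFinite _)
          rw [Set.ncard_pair hxz] at hle
          rw [hdB] at hdv
          omega
        have hvx : v ≠ x := fun he => hxSj (he ▸ hvSj)
        have hwadj : (S j).Adj v w := by
          rcases (hBadj v w).mp hw with ((hw' | hw') | hw') | hw'
          · rw [Sym2.eq_iff] at hw'
            rcases hw' with ⟨rfl, rfl⟩ | ⟨rfl, rfl⟩
            · exact absurd rfl hva
            · exact absurd rfl hvx
          · exact absurd ((S i).edge_vert hw') (fun h =>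
              Set.disjoint_left.mp (hdisj i j hij) h hvSj)
          · rw [Sym2.eq_iff] at hw'
            rcases hw' with ⟨rfl, rfl⟩ | ⟨rfl, rfl⟩
            · exact absurd rfl hvx
            · exact absurd rfl hvy
          · exact hw'
        have hwc : w = ctr j := by
          rcases hctrA j v w hwadj with rfl | rfl
          · exact absurd rfl hvc
          · rfl
        subst hwc
        omega
    have hcomp : ∃ I' : Set (Fin m), (T.verts ∪ B.verts)ᶜ = ⋃ k ∈ I', (S k).verts := by
      refine ⟨I \ {i, j}, ?_⟩
      have hTB : T.verts ∪ B.verts = T.verts ∪ ⋃ k ∈ ({i, j} : Set (Fin m)), (S k).verts := by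
        rw [hBverts, Set.biUnion_pair, Set.union_insert,
          Set.insert_eq_self.mpr (Set.mem_union_left _ ha)]
      rw [hTB, hcompl {i, j} (by
        rintro k (rfl | hk)
        · exact hi
        · rw [Set.mem_singleton_iff] at hk
          exact hk ▸ hj)]
    exact AUG a ha B hBconn (by have := hcnt i; have := hcnt j; omega)
      (by omega) hBint hcomp hH1 hH3
  -- Construction 5 : same star, both u1 u2 leaves, u2 has no neighbours outside T ∪ S i.
  have C5 : ∀ a ∈ T.verts, ∀ u1 u2 : V, u1 ∉ T.verts → u2 ∉ T.verts →
      ∀ i, i ∈ I → u1 ∈ (S i).verts → u2 ∈ (S i).verts → u1 ≠ u2 →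
      u1 ≠ ctr i → u2 ≠ ctr i →
      ∀ (hadj1 : G.Adj a u1) (hadj2 : G.Adj a u2),
      (∀ z, G.Adj u2 z → z ∈ T.verts ∨ z ∈ (S i).verts) → False := by
    intro a ha u1 u2 hu1T hu2T i hi hu1i hu2i hu12 hu1c hu2c hadj1 hadj2 hnb
    set B := (G.subgraphOfAdj hadj1 ⊔ G.subgraphOfAdj hadj2) ⊔
      ((S i).deleteVerts {u2}) with hBdef
    have hSiT : ∀ z ∈ (S i).verts, z ∉ T.verts := hSoutside i hi
    have haSi : a ∉ (S i).verts := fun h => hSiT a h ha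
    have hau1 : a ≠ u1 := hadj1.ne
    have hau2 : a ≠ u2 := hadj2.ne
    have hac : a ≠ ctr i := fun he => haSi (he ▸ hctrv i)
    have hcu2 : ctr i ≠ u2 := fun he => hu2c he.symm
    have hBverts : B.verts = insert a (S i).verts := by
      rw [hBdef]
      simp only [Subgraph.verts_sup, Subgraph.deleteVerts_verts, subgraphOfAdj_verts]
      ext z
      simp only [Set.mem_union, Set.mem_insert_iff, Set.mem_singleton_iff, Set.mem_diff]
      constructor
      · rintro ((h | h) | h)
        · rcases h with rfl | rfl
          · exact Or.inl rfl
          · exact Or.inr hu1i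
        · rcases h with rfl | rfl
          · exact Or.inl rfl
          · exact Or.inr hu2i
        · exact Or.inr h.1
      · rintro (rfl | h)
        · exact Or.inl (Or.inl (Or.inl rfl))
        · by_cases hz : z = u2
          · exact Or.inl (Or.inr (Or.inr hz))
          · exact Or.inr ⟨h, hz⟩
    have hBint : B.verts ∩ T.verts = {a} := by
      rw [hBverts]
      ext z
      constructor
      · rintro ⟨hz1, hz2⟩
        rcases hz1 with rfl | hz1
        · rfl
        · exact absurd hz2 (hSiT z hz1)
      · rintro rfl
        exact ⟨Set.mem_insert _ _, ha⟩
    have hdelE : ((S i).deleteVerts {u2}).edgeSet = (S i).edgeSet \ {s(ctr i, u2)} := by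
      ext e
      induction e using Sym2.ind with
      | _ p q =>
        simp only [Subgraph.mem_edgeSet, Subgraph.deleteVerts_adj, Set.mem_diff,
          Set.mem_singleton_iff]
        constructor
        · rintro ⟨hp1, hp2, hq1, hq2, hadj⟩
          refine ⟨hadj, ?_⟩
          intro he
          rw [Sym2.eq_iff] at he
          rcases he with ⟨_, h⟩ | ⟨h, _⟩
          · exact hq2 h
          · exact hp2 h
        · rintro ⟨hadj, hne⟩
          have hp : p ≠ u2 := by
            rintro rfl
            rcases hctrA i p q hadj with h | rfl
            · exact hu2c h
            · exact hne Sym2.eq_swap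
          have hq : q ≠ u2 := by
            rintro rfl
            rcases hctrA i p q hadj with rfl | h
            · exact hne rfl
            · exact hu2c h
          exact ⟨(S i).edge_vert hadj, fun h => hp h, (S i).edge_vert ((S i).adj_symm hadj),
            fun h => hq h, hadj⟩
    have hcu2mem : s(ctr i, u2) ∈ (S i).edgeSet :=
      Subgraph.mem_edgeSet.mpr (hctrB i u2 hu2i hu2c)
    have hBedges : B.edgeSet = insert s(a,u1) (insert s(a,u2)
        ((S i).edgeSet \ {s(ctr i, u2)})) := by
      rw [hBdef]
      simp only [Subgraph.edgeSet_sup, edgeSet_subgraphOfAdj, hdelE]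
      ext e
      simp only [Set.mem_union, Set.mem_insert_iff, Set.mem_singleton_iff]
      tauto
    have hne12 : s(a,u1) ≠ s(a,u2) := by
      intro he
      rw [Sym2.eq_iff] at he
      rcases he with ⟨_, h⟩ | ⟨h1, h2⟩
      · exact hu12 h
      · exact hau2 h1
    have hmem1 : s(a,u1) ∉ (S i).edgeSet \ {s(ctr i, u2)} := by
      rintro ⟨h, _⟩
      exact haSi ((S i).edge_vert (Subgraph.mem_edgeSet.mp h))
    have hmem2 : s(a,u2) ∉ (S i).edgeSet \ {s(ctr i, u2)} := by
      rintro ⟨h, _⟩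
      exact haSi ((S i).edge_vert (Subgraph.mem_edgeSet.mp h))
    have hBecard : B.edgeSet.ncard = (S i).edgeSet.ncard + 1 := by
      rw [hBedges, Set.ncard_insert_of_notMem (by
          intro h
          rcases h with h | h
          · exact hne12 h
          · exact hmem1 h) (Set.toFinite _),
        Set.ncard_insert_of_notMem hmem2 (Set.toFinite _),
        Set.ncard_diff_singleton_of_mem hcu2mem]
      have h6 := hsize i
      omega
    have hBvcard : B.verts.ncard = (S i).verts.ncard + 1 := by
      rw [hBverts, Set.ncard_insert_of_notMem haSi (Set.toFinite _)]
    have hdelconn : ((S i).deleteVerts {u2}).Connected := by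
      apply connected_of_center (c := ctr i)
      · rw [Subgraph.deleteVerts_verts]
        exact ⟨hctrv i, fun h => hcu2 h⟩
      · intro v hv hvc
        rw [Subgraph.deleteVerts_verts] at hv
        rw [Subgraph.deleteVerts_adj]
        exact ⟨hctrv i, fun h => hcu2 h, hv.1, hv.2, hctrB i v hv.1 hvc⟩
    have hBconn : B.Connected := by
      apply Subgraph.Connected.sup _ hdelconn
      · exact ⟨u1, by
          rw [Subgraph.verts_inf, Subgraph.verts_sup, subgraphOfAdj_verts,
            subgraphOfAdj_verts, Subgraph.deleteVerts_verts]
          exact ⟨Or.inl (Or.inr rfl), hu1i, fun h => hu12 h⟩⟩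
      apply Subgraph.Connected.sup (Subgraph.subgraphOfAdj_connected hadj1)
        (Subgraph.subgraphOfAdj_connected hadj2)
      exact ⟨a, by
        rw [Subgraph.verts_inf, subgraphOfAdj_verts, subgraphOfAdj_verts]
        exact ⟨Or.inl rfl, Or.inl rfl⟩⟩
    have hdB : ∀ v, subdeg B v =
        (((G.subgraphOfAdj hadj1).neighborSet v ∪ (G.subgraphOfAdj hadj2).neighborSet v) ∪
          ((S i).deleteVerts {u2}).neighborSet v).ncard := by
      intro v
      rw [subdeg_eq, hBdef, Subgraph.neighborSet_sup, Subgraph.neighborSet_sup]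
    have hdelnbr : ∀ v, v ≠ u2 → ((S i).deleteVerts {u2}).neighborSet v =
        (S i).neighborSet v \ {u2} := by
      intro v hv
      ext z
      simp only [Subgraph.mem_neighborSet, Subgraph.deleteVerts_adj, Set.mem_diff,
        Set.mem_singleton_iff]
      constructor
      · rintro ⟨_, _, _, hz2, hadj⟩
        exact ⟨hadj, fun h => hz2 h⟩
      · rintro ⟨hadj, hz2⟩
        exact ⟨(S i).edge_vert hadj, fun h => hv h, (S i).edge_vert ((S i).adj_symm hadj),
          fun h => hz2 h, hadj⟩
    have hdBa : subdeg B a = 2 := by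
      rw [hdB, neighborSet_fst_subgraphOfAdj, neighborSet_fst_subgraphOfAdj,
        hdelnbr a hau2, nbr_empty (S i) haSi, Set.empty_diff, Set.union_empty,
        Set.singleton_union, Set.ncard_pair hu12]
    have hdBu1 : subdeg B u1 = 2 := by
      rw [hdB, neighborSet_snd_subgraphOfAdj,
        neighborSet_subgraphOfAdj_of_ne_of_ne hadj2 (fun h => hau1 h.symm) hu12,
        hdelnbr u1 hu12, hnbrL i u1 hu1i hu1c,
        Set.diff_singleton_eq_self (fun h => hcu2 (Set.mem_singleton_iff.mp h).symm),
        Set.union_empty, Set.singleton_union, Set.ncard_pair hac]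
    have hdBc : 5 ≤ subdeg B (ctr i) := by
      rw [hdB]
      have hsub2 : ((S i).verts \ {ctr i}) \ {u2} ⊆
          ((G.subgraphOfAdj hadj1).neighborSet (ctr i) ∪
            (G.subgraphOfAdj hadj2).neighborSet (ctr i)) ∪
          ((S i).deleteVerts {u2}).neighborSet (ctr i) := by
        intro z hz
        right
        rw [hdelnbr (ctr i) hcu2, hnbrC i]
        exact hz
      have hle := Set.ncard_le_ncard hsub2 (Set.toFinite _)
      have hu2mem : u2 ∈ (S i).verts \ {ctr i} := ⟨hu2i, fun h => hu2c h⟩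
      rw [Set.ncard_diff_singleton_of_mem hu2mem] at hle
      have h6 := hnbrCcard i
      omega
    have hBadj : ∀ p q : V, B.Adj p q ↔
        ((s(a,u1) = s(p,q) ∨ s(a,u2) = s(p,q)) ∨
          ((S i).deleteVerts {u2}).Adj p q) := by
      intro p q
      rw [hBdef]
      simp only [Subgraph.sup_adj, subgraphOfAdj_adj]
    have hH1 : ∀ p q : V, B.Adj p q →
        ¬(subdeg T p + subdeg B p = 2 ∧ subdeg T q + subdeg B q = 2) := by
      intro p q hpq hcon
      obtain ⟨hp2, hq2⟩ := hcon
      have hdTa1 := hsub1 a ha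
      rcases (hBadj p q).mp hpq with (hpq | hpq) | hpq
      · rw [Sym2.eq_iff] at hpq
        rcases hpq with ⟨rfl, rfl⟩ | ⟨rfl, rfl⟩
        · omega
        · omega
      · rw [Sym2.eq_iff] at hpq
        rcases hpq with ⟨rfl, rfl⟩ | ⟨rfl, rfl⟩
        · omega
        · omega
      · rw [Subgraph.deleteVerts_adj] at hpq
        rcases hctrA i p q hpq.2.2.2.2 with rfl | rfl
        · omega
        · omega
    have hH3 : ∀ v ∈ B.verts, v ≠ a → subdeg B v = 1 →
        (∃ uu, (uu ∉ T.verts ∧ uu ∉ B.verts) ∧ G.Adj v uu) →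
        ∀ w, B.Adj v w → 5 ≤ subdeg T w + subdeg B w := by
      intro v hv hva hdv hex w hw
      rcases eq_or_ne v u2 with rfl | hvu2
      · obtain ⟨uu, ⟨huuT, huuB⟩, huadj⟩ := hex
        rcases hnb uu huadj with h | h
        · exact absurd h huuT
        · exact absurd (by rw [hBverts]; exact Set.mem_insert_of_mem _ h) huuB
      · have hvu1 : v ≠ u1 := by
          rintro rfl
          omega
        have hvc : v ≠ ctr i := by
          rintro rfl
          omega
        have hwadj : (S i).Adj v w := by
          rcases (hBadj v w).mp hw with (hw' | hw') | hw'
          · rw [Sym2.eq_iff] at hw'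
            rcases hw' with ⟨rfl, rfl⟩ | ⟨rfl, rfl⟩
            · exact absurd rfl hva
            · exact absurd rfl hvu1
          · rw [Sym2.eq_iff] at hw'
            rcases hw' with ⟨rfl, rfl⟩ | ⟨rfl, rfl⟩
            · exact absurd rfl hva
            · exact absurd rfl hvu2
          · rw [Subgraph.deleteVerts_adj] at hw'
            exact hw'.2.2.2.2
        have hwc : w = ctr i := by
          rcases hctrA i v w hwadj with rfl | rfl
          · exact absurd rfl hvc
          · rfl
        subst hwc
        omega
    have hcomp : ∃ I' : Set (Fin m), (T.verts ∪ B.verts)ᶜ = ⋃ k ∈ I', (S k).verts := by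
      refine ⟨I \ {i}, ?_⟩
      have hTB : T.verts ∪ B.verts = T.verts ∪ ⋃ k ∈ ({i} : Set (Fin m)), (S k).verts := by
        rw [hBverts, Set.biUnion_singleton, Set.union_insert,
          Set.insert_eq_self.mpr (Set.mem_union_left _ ha)]
      rw [hTB, hcompl {i} (by simpa using hi)]
    exact AUG a ha B hBconn (by have := hcnt i; omega) (by omega) hBint hcomp hH1 hH3
  -- Final assembly
  intro a ha
  by_contra hcon
  push_neg at hcon
  obtain ⟨u1, hu1m, u2, hu2m, hne⟩ := (Set.one_lt_ncard (Set.toFinite _)).mp hcon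
  obtain ⟨hadj1, hu1T⟩ := hu1m
  obtain ⟨hadj2, hu2T⟩ := hu2m
  obtain ⟨i, hi, hu1i⟩ := hfind u1 hu1T
  obtain ⟨j, hj, hu2j⟩ := hfind u2 hu2T
  rcases le_or_gt 2 (subdeg T a) with hdTa2 | _
  · exact C1 a ha u1 hu1T i hi hu1i hadj1 (Or.inl hdTa2)
  rcases eq_or_ne u1 (ctr i) with hc | hu1c
  · exact C1 a ha u1 hu1T i hi hu1i hadj1 (Or.inr hc)
  rcases eq_or_ne u2 (ctr j) with hc | hu2c
  · exact C1 a ha u2 hu2T j hj hu2j hadj2 (Or.inr hc)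
  rcases eq_or_ne i j with rfl | hij
  · by_cases hout : ∃ z, G.Adj u2 z ∧ z ∉ T.verts ∧ z ∉ (S i).verts
    · obtain ⟨z, hadjz, hzT, hzSi⟩ := hout
      obtain ⟨k, hk, hzk⟩ := hfind z hzT
      have hik : i ≠ k := fun he => hzSi (he ▸ hzk)
      exact C4 a ha u2 z hu2T hzT i k hi hk hik hu2j hu2c hzk hadj2 hadjz
    · push_neg at hout
      exact C5 a ha u1 u2 hu1T hu2T i hi hu1i hu2j hne hu1c hu2c hadj1 hadj2
        (fun z hz => by
          by_cases hzT : z ∈ T.verts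
          · exact Or.inl hzT
          · exact Or.inr (hout z hz hzT))
  · exact C3 a ha u1 u2 hu1T hu2T i j hi hj hij hu1i hu2j hadj1 hadj2
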